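/- Assume (H1), (H2) and (H3). If x ∈ L² is a nontrivial critical point of p_h (i.e. Dp_h(x) = 0 and p_h(x) > 0), then x ∈ H¹₀. Furthermore, if in addition ‖X‖_{H¹₀} ≤ M almost surely for some M > 0, then every nontrivial critical point x of p_h satisfies ‖x‖_{H¹₀} ≤ M. -/

import Mathlib

open MeasureTheory ProbabilityTheory Real Set Filter
open scoped InnerProductSpace ENNReal NNReal Topology

noncomputable section

/-- Lebesgue measure restricted to the unit interval `[0,1]`. -/
def μ01 : Measure ℝ := volume.restrict (Set.Icc (0:ℝ) 1)

/-- The space `L²([0,1])`. -/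
abbrev L2 : Type := Lp ℝ 2 μ01

/-- `x'` is a weak derivative of `x`, i.e. `x t = ∫₀ᵗ x'(s) ds` for a.e. `t ∈ [0,1]`. -/
def IsWeakDeriv (x' x : L2) : Prop :=
  ∀ᵐ t ∂μ01, x t = ∫ s in Set.Ioc (0:ℝ) t, x' s

/-- Membership in `H¹₀([0,1])`. -/
def MemH10 (x : L2) : Prop := ∃ x' : L2, IsWeakDeriv x' x

/-- The rescaled kernel `K_h(t) = K(t/h)`. -/
def Kh (K : ℝ → ℝ) (h : ℝ) : ℝ → ℝ := fun t => K (t / h)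

/-- Assumption (H1) on the kernel `K : [0,∞) → [0,∞)`. -/
structure AssumpH1 (K : ℝ → ℝ) (h K0 K1 K2 K3 : ℝ) : Prop where
  contDiff : ContDiff ℝ 3 K
  nonneg : ∀ t : ℝ, 0 ≤ t → 0 ≤ K t
  bound0 : ∀ t : ℝ, 0 ≤ t → |Kh K h (t ^ 2)| ≤ K0
  bound1 : ∀ t : ℝ, 0 ≤ t → |deriv (Kh K h) (t ^ 2) * t| ≤ K1
  bound2 : ∀ t : ℝ, 0 ≤ t →
    |deriv (Kh K h) (t ^ 2)| + |iteratedDeriv 2 (Kh K h) (t ^ 2) * t ^ 2| ≤ K2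
  bound3 : ∀ t : ℝ, 0 ≤ t →
    |iteratedDeriv 2 (Kh K h) (t ^ 2) * t| + |iteratedDeriv 3 (Kh K h) (t ^ 2) * t ^ 3| ≤ K3

/-- Assumption (H2) on the kernel: `K'(t²) + K(t²) ≤ 0` for all `t ≥ 0`. -/
def AssumpH2 (K : ℝ → ℝ) : Prop := ∀ t : ℝ, 0 ≤ t → deriv K (t ^ 2) + K (t ^ 2) ≤ 0

/-- The pseudo-density `p_h(x) = E_P K_h(‖X − x‖²_{L²})`. -/
def pseudoDensity {Ω : Type*} [MeasurableSpace Ω] (P : Measure Ω) (X : Ω → L2)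
    (K : ℝ → ℝ) (h : ℝ) (x : L2) : ℝ :=
  ∫ ω, Kh K h (‖X ω - x‖ ^ 2) ∂P

/-- The L² gradient `Dp_h(x) = 2 E_P [K'_h(‖X − x‖²)(x − X)]`. -/
def pseudoGrad {Ω : Type*} [MeasurableSpace Ω] (P : Measure Ω) (X : Ω → L2)
    (K : ℝ → ℝ) (h : ℝ) (x : L2) : L2 :=
  (2 : ℝ) • ∫ ω, deriv (Kh K h) (‖X ω - x‖ ^ 2) • (x - X ω) ∂P

/-! ### Auxiliary development: the Volterra operator on `L²([0,1])` -/

section Aux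

instance : IsProbabilityMeasure μ01 := ⟨by simp [μ01, Real.volume_Icc]⟩

instance : NullSingletonClass μ01 := by unfold μ01; infer_instance

lemma L2.integrable' (f : L2) : Integrable (⇑f) μ01 :=
  (Lp.memLp f).integrable one_le_two

lemma L2.integrableOn' (f : L2) : IntegrableOn (⇑f) (Set.Icc (0:ℝ) 1) volume :=
  L2.integrable' f

lemma Ioc_subset_unit {t : ℝ} (ht : t ∈ Set.Icc (0:ℝ) 1) :
    Set.Ioc (0:ℝ) t ⊆ Set.Icc (0:ℝ) 1 := fun s hs => ⟨hs.1.le, hs.2.trans ht.2⟩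

lemma μ01_restrict_Ioc {t : ℝ} (ht : t ∈ Set.Icc (0:ℝ) 1) :
    μ01.restrict (Set.Ioc (0:ℝ) t) = volume.restrict (Set.Ioc (0:ℝ) t) := by
  rw [μ01, Measure.restrict_restrict measurableSet_Ioc,
    Set.inter_eq_left.mpr (Ioc_subset_unit ht)]

lemma ae_mem_unit : ∀ᵐ t ∂μ01, t ∈ Set.Icc (0:ℝ) 1 := by
  rw [μ01]; exact ae_restrict_mem measurableSet_Icc

/-- The primitive `t ↦ ∫₀ᵗ f`. -/
def primFun (f : L2) : ℝ → ℝ := fun t => ∫ s in Set.Ioc (0:ℝ) t, f s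

lemma primFun_bound (f : L2) {t : ℝ} (ht : t ∈ Set.Icc (0:ℝ) 1) :
    ‖primFun f t‖ ≤ ‖f‖ := by
  have h1 : ‖primFun f t‖ ≤ ∫ s in Set.Ioc (0:ℝ) t, ‖f s‖ :=
    norm_integral_le_integral_norm _
  have h2 : ∫ s in Set.Ioc (0:ℝ) t, ‖f s‖ ≤ ∫ s in Set.Icc (0:ℝ) 1, ‖f s‖ :=
    setIntegral_mono_set (L2.integrableOn' f).norm
      (Filter.Eventually.of_forall fun s => norm_nonneg _)
      (HasSubset.Subset.eventuallyLE (Ioc_subset_unit ht))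
  have h3 : ∫ s in Set.Icc (0:ℝ) 1, ‖f s‖ = ∫ s, ‖f s‖ ∂μ01 := rfl
  have h4 : ∫ s, ‖f s‖ ∂μ01 ≤ ‖f‖ := by
    have hint : Integrable (⇑f) μ01 := L2.integrable' f
    have h5 : ENNReal.ofReal (∫ s, ‖f s‖ ∂μ01) ≤ eLpNorm (⇑f) 2 μ01 := by
      rw [ofReal_integral_norm_eq_lintegral_enorm hint, ← eLpNorm_one_eq_lintegral_enorm]
      exact eLpNorm_le_eLpNorm_of_exponent_le one_le_two (Lp.aestronglyMeasurable f)
    have h6 := ENNReal.toReal_mono (Lp.eLpNorm_ne_top f) h5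
    rwa [ENNReal.toReal_ofReal (integral_nonneg fun s => norm_nonneg _), ← Lp.norm_def] at h6
  linarith

lemma primFun_continuousOn (f : L2) : ContinuousOn (primFun f) (Set.Icc (0:ℝ) 1) :=
  intervalIntegral.continuousOn_primitive (L2.integrableOn' f)

lemma primFun_aesm (f : L2) : AEStronglyMeasurable (primFun f) μ01 :=
  (primFun_continuousOn f).aestronglyMeasurable measurableSet_Icc

lemma primFun_memℒp (f : L2) : MemLp (primFun f) 2 μ01 :=
  MemLp.of_bound (primFun_aesm f) ‖f‖ (by
    filter_upwards [ae_mem_unit] with t ht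
    exact primFun_bound f ht)

/-- The primitive, as an element of `L²`. -/
def primLp (f : L2) : L2 := (primFun_memℒp f).toLp (primFun f)

lemma primLp_coe (f : L2) : ⇑(primLp f) =ᵐ[μ01] primFun f := MemLp.coeFn_toLp _

lemma primFun_add (f g : L2) :
    ∀ᵐ t ∂μ01, primFun (f + g) t = primFun f t + primFun g t := by
  filter_upwards [ae_mem_unit] with t ht
  have h1 : primFun (f + g) t = ∫ s in Set.Ioc (0:ℝ) t, (f s + g s) := by
    apply integral_congr_ae
    have h2 : ⇑(f + g) =ᵐ[volume.restrict (Set.Ioc (0:ℝ) t)] (⇑f + ⇑g) := by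
      rw [← μ01_restrict_Ioc ht]
      exact ae_restrict_of_ae (Lp.coeFn_add f g)
    filter_upwards [h2] with s hs; exact hs
  rw [h1, integral_add ((L2.integrableOn' f).mono_set (Ioc_subset_unit ht))
      ((L2.integrableOn' g).mono_set (Ioc_subset_unit ht))]
  rfl

lemma primFun_smul (c : ℝ) (f : L2) :
    ∀ᵐ t ∂μ01, primFun (c • f) t = c * primFun f t := by
  filter_upwards [ae_mem_unit] with t ht
  have h1 : primFun (c • f) t = ∫ s in Set.Ioc (0:ℝ) t, c * f s := by
    apply integral_congr_ae
    have h2 : ⇑(c • f) =ᵐ[volume.restrict (Set.Ioc (0:ℝ) t)] c • ⇑f := by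
      rw [← μ01_restrict_Ioc ht]
      exact ae_restrict_of_ae (Lp.coeFn_smul c f)
    filter_upwards [h2] with s hs; exact hs
  rw [h1, integral_const_mul]
  rfl

/-- The Volterra integration operator, as a linear map on `L²`. -/
def Vlin : L2 →ₗ[ℝ] L2 where
  toFun := primLp
  map_add' f g := by
    apply Lp.ext
    filter_upwards [primLp_coe (f + g), Lp.coeFn_add (primLp f) (primLp g),
      primLp_coe f, primLp_coe g, primFun_add f g] with t h1 h2 h3 h4 h5
    rw [h1, h5, h2, Pi.add_apply, h3, h4]
  map_smul' c f := by
    apply Lp.ext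
    filter_upwards [primLp_coe (c • f), Lp.coeFn_smul c (primLp f),
      primLp_coe f, primFun_smul c f] with t h1 h2 h3 h4
    rw [h1, h4, RingHom.id_apply, h2, Pi.smul_apply, h3, smul_eq_mul]

lemma Vlin_norm_le (f : L2) : ‖Vlin f‖ ≤ 1 * ‖f‖ := by
  rw [one_mul]
  show ‖primLp f‖ ≤ ‖f‖
  rw [primLp, Lp.norm_toLp]
  have hb : eLpNorm (primFun f) 2 μ01 ≤ ENNReal.ofReal ‖f‖ := by
    have := eLpNorm_le_of_ae_bound (μ := μ01) (p := 2)
      (f := primFun f) (C := ‖f‖) (by filter_upwards [ae_mem_unit] with t ht; exact primFun_bound f ht)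
    simpa [measure_univ] using this
  have := ENNReal.toReal_mono ENNReal.ofReal_ne_top hb
  rwa [ENNReal.toReal_ofReal (norm_nonneg f)] at this

/-- The Volterra integration operator, as a continuous linear map on `L²`. -/
def Vop : L2 →L[ℝ] L2 := Vlin.mkContinuous 1 Vlin_norm_le

lemma Vop_coe (f : L2) : ⇑(Vop f) =ᵐ[μ01] primFun f := primLp_coe f

lemma isWeakDeriv_iff_eq (x' x : L2) : IsWeakDeriv x' x ↔ x = Vop x' := by
  constructor
  · intro hw
    apply Lp.ext (μ := μ01)
    filter_upwards [hw, Vop_coe x'] with t h1 h2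
    exact h1.trans h2.symm
  · intro hx
    rw [hx]
    exact Vop_coe x'

lemma deriv_Kh_eq {K : ℝ → ℝ} (hK : ContDiff ℝ 3 K) {h : ℝ} (hh : 0 < h) (t : ℝ) :
    deriv (Kh K h) t = deriv K (t / h) / h := by
  have h1 : HasDerivAt (fun s : ℝ => s / h) (1 / h) t := (hasDerivAt_id t).div_const h
  have h2 : HasDerivAt K (deriv K (t / h)) (t / h) :=
    ((hK.differentiable (by norm_num)) (t / h)).hasDerivAt
  have hd := h2.comp t h1
  have : Kh K h = K ∘ fun s : ℝ => s / h := rfl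
  rw [this, hd.deriv, mul_one_div]

lemma key_construction {Ω : Type*} [MeasurableSpace Ω] (P : Measure Ω) [IsProbabilityMeasure P]
    (X X' : Ω → L2) (g : Ω → ℝ) (x : L2)
    (g_int : Integrable g P) (hXH10 : ∀ᵐ ω ∂P, X ω = Vop (X' ω))
    (int2 : Integrable (fun ω => g ω • X ω) P) (int3 : Integrable (fun ω => g ω • X' ω) P)
    (hzero : ∫ ω, g ω • (x - X ω) ∂P = 0)
    (hc_neg : ∫ ω, g ω ∂P < 0) (g_nonpos : ∀ ω, g ω ≤ 0) :
    ∃ x' : L2, IsWeakDeriv x' x ∧ ∀ M : ℝ, 0 < M → (∀ᵐ ω ∂P, ‖X' ω‖ ≤ M) → ‖x'‖ ≤ M := by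
  have hc_ne : (∫ ω, g ω ∂P) ≠ 0 := hc_neg.ne
  have int1 : Integrable (fun ω => g ω • x) P := g_int.smul_const x
  have hsplit : ∫ ω, g ω • (x - X ω) ∂P
      = (∫ ω, g ω ∂P) • x - ∫ ω, g ω • X ω ∂P := by
    have heq : (fun ω => g ω • (x - X ω)) = fun ω => g ω • x - g ω • X ω :=
      funext fun ω => smul_sub _ _ _
    rw [heq, integral_sub int1 int2, integral_smul_const]
  have hxz : (∫ ω, g ω ∂P) • x = ∫ ω, g ω • X ω ∂P := by
    rw [hsplit] at hzero
    exact sub_eq_zero.mp hzero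
  have hXV : ∫ ω, g ω • X ω ∂P = Vop (∫ ω, g ω • X' ω ∂P) := by
    have h1 : ∫ ω, g ω • X ω ∂P = ∫ ω, Vop (g ω • X' ω) ∂P := by
      apply integral_congr_ae
      filter_upwards [hXH10] with ω hω
      rw [hω, _root_.map_smul]
    rw [h1, ContinuousLinearMap.integral_comp_comm Vop int3]
  refine ⟨(∫ ω, g ω ∂P)⁻¹ • ∫ ω, g ω • X' ω ∂P, ?_, ?_⟩
  · rw [isWeakDeriv_iff_eq, _root_.map_smul, ← hXV, ← hxz, inv_smul_smul₀ hc_ne]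
  · intro M hM hbd
    have hcpos : 0 < -(∫ ω, g ω ∂P) := neg_pos.mpr hc_neg
    have hz : ‖∫ ω, g ω • X' ω ∂P‖ ≤ (-(∫ ω, g ω ∂P)) * M := by
      have h1 : ‖∫ ω, g ω • X' ω ∂P‖ ≤ ∫ ω, ‖g ω • X' ω‖ ∂P :=
        norm_integral_le_integral_norm _
      have h2 : ∫ ω, ‖g ω • X' ω‖ ∂P ≤ ∫ ω, -g ω * M ∂P := by
        apply integral_mono_ae int3.norm (g_int.neg.mul_const M)
        filter_upwards [hbd] with ω hω
        rw [norm_smul, Real.norm_eq_abs, abs_of_nonpos (g_nonpos ω)]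
        exact mul_le_mul_of_nonneg_left hω (by linarith [g_nonpos ω])
      have h3 : ∫ ω, -g ω * M ∂P = (-(∫ ω, g ω ∂P)) * M := by
        rw [integral_mul_const, integral_neg]
      linarith
    rw [norm_smul, Real.norm_eq_abs, abs_inv, abs_of_neg hc_neg]
    calc (-(∫ ω, g ω ∂P))⁻¹ * ‖∫ ω, g ω • X' ω ∂P‖
        ≤ (-(∫ ω, g ω ∂P))⁻¹ * ((-(∫ ω, g ω ∂P)) * M) :=
          mul_le_mul_of_nonneg_left hz (inv_nonneg.mpr hcpos.le)
      _ = M := by field_simp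

end Aux

/-- Under (H1), (H2), (H3): every nontrivial critical point of `p_h`
(`Dp_h(x) = 0` and `p_h(x) > 0`) belongs to `H¹₀`; and if moreover `‖X‖_{H¹₀} ≤ M` a.s.
for some `M > 0`, then every nontrivial critical point `x` satisfies `‖x‖_{H¹₀} ≤ M`. -/
theorem statement8
    {Ω : Type*} [MeasurableSpace Ω] (P : Measure Ω) [IsProbabilityMeasure P]
    (X X' : Ω → L2) (K : ℝ → ℝ) (h K0 K1 K2 K3 M1 N1 : ℝ) (hh : 0 < h)
    (hH1 : AssumpH1 K h K0 K1 K2 K3)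
    (hH2 : AssumpH2 K)
    (hXmeas : AEStronglyMeasurable X P) (hX'meas : AEStronglyMeasurable X' P)
    (hXH10 : ∀ᵐ ω ∂P, IsWeakDeriv (X' ω) (X ω))
    (hXint : Integrable (fun ω => ‖X ω‖) P) (hX'int : Integrable (fun ω => ‖X' ω‖) P)
    (hM1 : (∫ ω, ‖X ω‖ ∂P) ≤ M1) (hN1 : (∫ ω, ‖X' ω‖ ∂P) ≤ N1) :
    (∀ x : L2, pseudoGrad P X K h x = 0 → 0 < pseudoDensity P X K h x →
      ∃ x' : L2, IsWeakDeriv x' x) ∧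
    (∀ M : ℝ, 0 < M → (∀ᵐ ω ∂P, ‖X' ω‖ ≤ M) →
      ∀ x : L2, pseudoGrad P X K h x = 0 → 0 < pseudoDensity P X K h x →
        ∃ x' : L2, IsWeakDeriv x' x ∧ ‖x'‖ ≤ M) := by
  have hKcont : Continuous (Kh K h) := hH1.contDiff.continuous.comp (continuous_id.div_const h)
  have hderiv_eq : deriv (Kh K h) = fun t => deriv K (t / h) / h :=
    funext (deriv_Kh_eq hH1.contDiff hh)
  have hKderiv_cont : Continuous (deriv (Kh K h)) := by
    rw [hderiv_eq]
    exact ((hH1.contDiff.continuous_deriv (by norm_num)).comp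
      (continuous_id.div_const h)).div_const h
  have hXH10' : ∀ᵐ ω ∂P, X ω = Vop (X' ω) :=
    hXH10.mono fun ω hω => (isWeakDeriv_iff_eq _ _).mp hω
  have main : ∀ x : L2, pseudoGrad P X K h x = 0 → 0 < pseudoDensity P X K h x →
      ∃ x' : L2, IsWeakDeriv x' x ∧
        ∀ M : ℝ, 0 < M → (∀ᵐ ω ∂P, ‖X' ω‖ ≤ M) → ‖x'‖ ≤ M := by
    intro x hgrad hdens
    have hn_meas : AEStronglyMeasurable (fun ω => ‖X ω - x‖) P :=
      (hXmeas.sub aestronglyMeasurable_const).norm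
    have g_aesm : AEStronglyMeasurable (fun ω => deriv (Kh K h) (‖X ω - x‖ ^ 2)) P := by
      have hcont : Continuous fun r : ℝ => deriv (Kh K h) (r ^ 2) :=
        hKderiv_cont.comp (continuous_pow 2)
      exact hcont.comp_aestronglyMeasurable hn_meas
    have fK_aesm : AEStronglyMeasurable (fun ω => Kh K h (‖X ω - x‖ ^ 2)) P := by
      have hcont : Continuous fun r : ℝ => Kh K h (r ^ 2) := hKcont.comp (continuous_pow 2)
      exact hcont.comp_aestronglyMeasurable hn_meas
    have g_bound : ∀ ω, |deriv (Kh K h) (‖X ω - x‖ ^ 2)| ≤ K2 := fun ω =>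
      le_trans (le_add_of_nonneg_right (abs_nonneg _)) (hH1.bound2 _ (norm_nonneg _))
    have fK_nonneg : ∀ ω, 0 ≤ Kh K h (‖X ω - x‖ ^ 2) := fun ω =>
      hH1.nonneg _ (div_nonneg (sq_nonneg _) hh.le)
    have g_le : ∀ ω, deriv (Kh K h) (‖X ω - x‖ ^ 2) ≤ -(Kh K h (‖X ω - x‖ ^ 2) / h) := by
      intro ω
      have hu : (0:ℝ) ≤ ‖X ω - x‖ / Real.sqrt h :=
        div_nonneg (norm_nonneg _) (Real.sqrt_nonneg _)
      have hu2 : (‖X ω - x‖ / Real.sqrt h) ^ 2 = ‖X ω - x‖ ^ 2 / h := by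
        rw [div_pow, Real.sq_sqrt hh.le]
      have h2 := hH2 _ hu
      rw [hu2] at h2
      have hgω : deriv (Kh K h) (‖X ω - x‖ ^ 2) = deriv K (‖X ω - x‖ ^ 2 / h) / h :=
        deriv_Kh_eq hH1.contDiff hh _
      have hfKω : Kh K h (‖X ω - x‖ ^ 2) = K (‖X ω - x‖ ^ 2 / h) := rfl
      rw [hgω, hfKω, ← neg_div]
      exact (div_le_div_iff_of_pos_right hh).mpr (by linarith)
    have g_nonpos : ∀ ω, deriv (Kh K h) (‖X ω - x‖ ^ 2) ≤ 0 := fun ω =>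
      (g_le ω).trans (neg_nonpos.mpr (div_nonneg (fK_nonneg ω) hh.le))
    have g_int : Integrable (fun ω => deriv (Kh K h) (‖X ω - x‖ ^ 2)) P :=
      ⟨g_aesm, HasFiniteIntegral.of_bounded (C := K2)
        (Filter.Eventually.of_forall fun ω => by rw [Real.norm_eq_abs]; exact g_bound ω)⟩
    have fK_int : Integrable (fun ω => Kh K h (‖X ω - x‖ ^ 2)) P :=
      ⟨fK_aesm, HasFiniteIntegral.of_bounded (C := K0)
        (Filter.Eventually.of_forall fun ω => by
          rw [Real.norm_eq_abs]; exact hH1.bound0 _ (norm_nonneg _))⟩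
    have hdens' : (0:ℝ) < ∫ ω, Kh K h (‖X ω - x‖ ^ 2) ∂P := by
      rw [pseudoDensity] at hdens; exact hdens
    have hc_neg : ∫ ω, deriv (Kh K h) (‖X ω - x‖ ^ 2) ∂P < 0 := by
      have h1 : ∫ ω, deriv (Kh K h) (‖X ω - x‖ ^ 2) ∂P
          ≤ ∫ ω, -(Kh K h (‖X ω - x‖ ^ 2) / h) ∂P :=
        integral_mono g_int ((fK_int.div_const h).neg) g_le
      rw [integral_neg, integral_div] at h1
      have h2 : (0:ℝ) < (∫ ω, Kh K h (‖X ω - x‖ ^ 2) ∂P) / h := div_pos hdens' hh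
      linarith
    have hzero : ∫ ω, deriv (Kh K h) (‖X ω - x‖ ^ 2) • (x - X ω) ∂P = 0 := by
      rw [pseudoGrad] at hgrad
      exact (smul_eq_zero.mp hgrad).resolve_left two_ne_zero
    have int2 : Integrable (fun ω => deriv (Kh K h) (‖X ω - x‖ ^ 2) • X ω) P := by
      apply Integrable.mono (hXint.const_mul K2) (g_aesm.smul hXmeas)
      filter_upwards with ω
      rw [Pi.smul_apply', norm_smul]
      calc ‖deriv (Kh K h) (‖X ω - x‖ ^ 2)‖ * ‖X ω‖ ≤ K2 * ‖X ω‖ :=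
            mul_le_mul_of_nonneg_right (by rw [Real.norm_eq_abs]; exact g_bound ω)
              (norm_nonneg _)
        _ ≤ ‖K2 * ‖X ω‖‖ := le_abs_self _
    have int3 : Integrable (fun ω => deriv (Kh K h) (‖X ω - x‖ ^ 2) • X' ω) P := by
      apply Integrable.mono (hX'int.const_mul K2) (g_aesm.smul hX'meas)
      filter_upwards with ω
      rw [Pi.smul_apply', norm_smul]
      calc ‖deriv (Kh K h) (‖X ω - x‖ ^ 2)‖ * ‖X' ω‖ ≤ K2 * ‖X' ω‖ :=
            mul_le_mul_of_nonneg_right (by rw [Real.norm_eq_abs]; exact g_bound ω)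
              (norm_nonneg _)
        _ ≤ ‖K2 * ‖X' ω‖‖ := le_abs_self _
    exact key_construction P X X' (fun ω => deriv (Kh K h) (‖X ω - x‖ ^ 2)) x
      g_int hXH10' int2 int3 hzero hc_neg g_nonpos
  constructor
  · intro x hgrad hdens
    obtain ⟨x', hx', -⟩ := main x hgrad hdens
    exact ⟨x', hx'⟩
  · intro M hM hbd x hgrad hdens
    obtain ⟨x', hx', hbound⟩ := main x hgrad hdens
    exact ⟨x', hx', hbound M hM hbd⟩

end
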